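/- Let F be a field, η ∈ M₂(F) with irreducible characteristic polynomial, β₁ = [[η, I],[0, η]] ∈ M₄(F), and β₂ = diag(η, η). If g ∈ GL₄(F) satisfies g⁻¹ β₁ g = [[η, B],[0, η]] for some B ∈ M₂(F), then g centralizes β₂ implies g is block upper-triangular. More precisely: if g lies in the centralizer of β₂ in GL₄(F) (identified with GL₂(K), K = F[η]) and g⁻¹ β₁ g is block upper-triangular of the form [[η, B],[0, η]], then g is block upper-triangular in M₄(F). -/
import Mathlib


open Matrix

/-- Let `η ∈ M₂(F)` have irreducible characteristic polynomial,
`β₁ = [[η, 1],[0, η]]` and `β₂ = diag(η, η)` in `M₄(F)`.  If `g ∈ GL₄(F)` centralizes `β₂`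
and `g⁻¹ β₁ g = [[η, B],[0, η]]` for some `B ∈ M₂(F)`, then `g` is block upper-triangular,
i.e. its lower-left `2×2` block vanishes. -/
theorem stmt6 (F : Type*) [Field F]
    (η : Matrix (Fin 2) (Fin 2) F) (hη : Irreducible η.charpoly)
    (β₁ β₂ : Matrix (Fin 4) (Fin 4) F)
    (hβ₁ : β₁ = Matrix.reindex finSumFinEquiv finSumFinEquiv (Matrix.fromBlocks η 1 0 η))
    (hβ₂ : β₂ = Matrix.reindex finSumFinEquiv finSumFinEquiv (Matrix.fromBlocks η 0 0 η))
    (g : GL (Fin 4) F)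
    (hcent : (g : Matrix (Fin 4) (Fin 4) F) * β₂ = β₂ * (g : Matrix (Fin 4) (Fin 4) F))
    (B : Matrix (Fin 2) (Fin 2) F)
    (hconj : (g⁻¹ : GL (Fin 4) F) * β₁ * (g : Matrix (Fin 4) (Fin 4) F) =
      Matrix.reindex finSumFinEquiv finSumFinEquiv (Matrix.fromBlocks η B 0 η)) :
    ((Matrix.reindex (finSumFinEquiv (m := 2) (n := 2)).symm (finSumFinEquiv (m := 2) (n := 2)).symm
      (g : Matrix (Fin 4) (Fin 4) F)).toBlocks₂₁ = 0) := by
  set E := finSumFinEquiv (m := 2) (n := 2) with hE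
  set G : Matrix (Fin 4) (Fin 4) F := (g : Matrix (Fin 4) (Fin 4) F) with hG
  set g' : Matrix (Fin 2 ⊕ Fin 2) (Fin 2 ⊕ Fin 2) F := Matrix.reindex E.symm E.symm G with hg'
  have hGr : G = Matrix.reindex E E g' := by simp [hg']
  have hinv : G * ((g⁻¹ : GL (Fin 4) F) : Matrix (Fin 4) (Fin 4) F) = 1 := by
    simpa [hG] using g.mul_inv
  have h1 : β₁ * G = G * Matrix.reindex E E (Matrix.fromBlocks η B 0 η) := by
    calc β₁ * G = (G * ((g⁻¹ : GL (Fin 4) F) : Matrix (Fin 4) (Fin 4) F)) * β₁ * G := by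
          rw [hinv, one_mul]
      _ = G * (((g⁻¹ : GL (Fin 4) F) : Matrix (Fin 4) (Fin 4) F) * β₁ * G) := by
          rw [mul_assoc, mul_assoc, mul_assoc]
      _ = _ := by rw [hconj]
  have hreinj : Function.Injective (Matrix.reindex (α := F) E E) :=
    (Matrix.reindex E E).injective
  have hmul : ∀ A C : Matrix (Fin 2 ⊕ Fin 2) (Fin 2 ⊕ Fin 2) F,
      Matrix.reindex E E A * Matrix.reindex E E C = Matrix.reindex E E (A * C) := by
    intro A C
    simp [Matrix.reindex_apply, Matrix.submatrix_mul_equiv]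
  have hblk1 : Matrix.fromBlocks η 1 0 η * g' = g' * Matrix.fromBlocks η B 0 η := by
    apply hreinj
    rw [← hmul, ← hmul, ← hGr, ← hβ₁, h1]
  have hblk2 : g' * Matrix.fromBlocks η 0 0 η = Matrix.fromBlocks η 0 0 η * g' := by
    apply hreinj
    rw [← hmul, ← hmul, ← hGr, ← hβ₂, hcent]
  rw [← Matrix.fromBlocks_toBlocks g'] at hblk1 hblk2
  rw [Matrix.fromBlocks_multiply, Matrix.fromBlocks_multiply] at hblk1 hblk2
  have e1 := congrArg Matrix.toBlocks₁₁ hblk1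
  have e2 := congrArg Matrix.toBlocks₁₁ hblk2
  simp only [Matrix.toBlocks_fromBlocks₁₁, Matrix.mul_zero, Matrix.zero_mul,
    Matrix.one_mul, Matrix.mul_one, add_zero, zero_add] at e1 e2
  -- e1 : η * p + r = p * η, e2 : p * η = η * p
  have : (η * (g'.toBlocks₁₁) + g'.toBlocks₂₁) = η * g'.toBlocks₁₁ := by
    rw [e1, e2]
  have hr : g'.toBlocks₂₁ = 0 := by
    have := congrArg (fun M => M - η * g'.toBlocks₁₁) this
    simpa [add_sub_cancel_left] using this
  exact hr
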